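/- Assume 0 ≤ c ≤ min P and let prices p^1, …, p^T be drawn independently with p^t ∼ π^t. For every ε > 0, Pr[ R̃^T(c) − R̄^T(c) ≥ ε ] ≤ 2k²·exp( −ε² / (2k² Σ_{t=1}^T d_t²) ), where R̃^T(c) = Σ_{p∈P} max_{q∈P} R̃^T_{p,q}(c), R̄^T(c) = Σ_{p∈P} max_{q∈P} R̄^T_{p,q}(c), and d_t = (1/T)·(1/min_{p′∈C^t} π^t(p′) + 1)·p̄. -/

import Mathlib

open Finset

def IsPMF (P : Finset ℝ) (f : ℝ → ℝ) : Prop :=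
  (∀ p, 0 ≤ f p) ∧ (∑ p ∈ P, f p = 1) ∧ ∀ p, p ∉ P → f p = 0

noncomputable def suppF (P : Finset ℝ) (f : ℝ → ℝ) : Finset ℝ :=
  P.filter fun p => 0 < f p

def IsAllocSeq (P : Finset ℝ) {T : ℕ} (x : Fin T → ℝ → ℝ) : Prop :=
  ∀ t : Fin T, (∀ p ∈ P, x t p ∈ Set.Icc (0:ℝ) 1) ∧
    ∀ p ∈ P, ∀ q ∈ P, p ≤ q → x t q ≤ x t p

noncomputable def regret (P : Finset ℝ) (hP : P.Nonempty) {T : ℕ}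
    (π x : Fin T → ℝ → ℝ) (c : ℝ) : ℝ :=
  haveI : Nonempty {p : ℝ // p ∈ P} := Finset.nonempty_coe_sort.mpr hP
  Finset.univ.sup' Finset.univ_nonempty
    fun σ : {p : ℝ // p ∈ P} → {p : ℝ // p ∈ P} =>
      (T : ℝ)⁻¹ * ∑ t : Fin T, ∑ p ∈ P.attach,
        π t p.1 * (((σ p).1 - c) * x t (σ p).1 - (p.1 - c) * x t p.1)

noncomputable def pessA (P : Finset ℝ) {T : ℕ} (π x : Fin T → ℝ → ℝ)
    (t : Fin T) (p : ℝ) : ℝ :=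
  if p ∈ suppF P (π t) then x t p
  else if h : ((suppF P (π t)).filter fun r => r ≤ p).Nonempty then
    x t (((suppF P (π t)).filter fun r => r ≤ p).max' h)
  else 1

noncomputable def xhatF (P : Finset ℝ) {T : ℕ} (π x : Fin T → ℝ → ℝ)
    (t : Fin T) (s : ℝ) (p : ℝ) : ℝ :=
  if p ∈ suppF P (π t) then (if p = s then x t s / π t s else 0)
  else if h : ((suppF P (π t)).filter fun r => r ≤ p).Nonempty then
    (if ((suppF P (π t)).filter fun r => r ≤ p).max' h = s then x t s / π t s else 0)
  else 1

open Classical in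
noncomputable def probM (P : Finset ℝ) {T : ℕ} (π : Fin T → ℝ → ℝ)
    (E : (Fin T → ℝ) → Prop) : ℝ :=
  ∑ ps ∈ Fintype.piFinset (fun _ : Fin T => P),
    if E ps then ∏ t, π t (ps t) else 0

noncomputable def Rtilpq (P : Finset ℝ) {T : ℕ} (π x : Fin T → ℝ → ℝ)
    (c p q : ℝ) (ps : Fin T → ℝ) : ℝ :=
  (T : ℝ)⁻¹ * ∑ t : Fin T, π t p *
    ((q - c) * xhatF P π x t (ps t) q - (p - c) * xhatF P π x t (ps t) p)

noncomputable def Rbarpq (P : Finset ℝ) {T : ℕ} (π x : Fin T → ℝ → ℝ)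
    (c p q : ℝ) : ℝ :=
  (T : ℝ)⁻¹ * ∑ t : Fin T, π t p *
    ((q - c) * pessA P π x t q - (p - c) * pessA P π x t p)

lemma chord_exp {z y d : ℝ} (hd : 0 < d) (hy : |y| ≤ d) :
    Real.exp (z * y) ≤ Real.cosh (z*d) + (y/d) * Real.sinh (z*d) := by
  obtain ⟨h1, h2⟩ := abs_le.mp hy
  have hθ0 : 0 ≤ (d - y) / (2*d) := div_nonneg (by linarith) (by linarith)
  have hθ1 : 0 ≤ (d + y) / (2*d) := div_nonneg (by linarith) (by linarith)
  have hsum : (d - y) / (2*d) + (d + y) / (2*d) = 1 := by field_simp; ring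
  have := convexOn_exp.2 (Set.mem_univ (z * (-d))) (Set.mem_univ (z * d)) hθ0 hθ1 hsum
  simp only [smul_eq_mul] at this
  have harg : (d - y)/(2*d) * (z * (-d)) + (d + y)/(2*d) * (z * d) = z * y := by
    field_simp; ring
  rw [harg] at this
  refine this.trans_eq ?_
  rw [Real.cosh_eq, Real.sinh_eq, Real.exp_neg, ← Real.exp_neg (z*d)]
  have hz : z * (-d) = -(z*d) := by ring
  rw [hz]
  field_simp
  ring

lemma mgf_bound (P : Finset ℝ) (f : ℝ → ℝ) (hf : IsPMF P f) (g : ℝ → ℝ)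
    {d : ℝ} (hd : 0 < d) (l : ℝ)
    (hmean : ∑ a ∈ P, f a * g a = 0)
    (hbd : ∀ a ∈ P, 0 < f a → |g a| ≤ d) :
    ∑ a ∈ P, f a * Real.exp (l * g a) ≤ Real.exp (l^2 * d^2 / 2) := by
  set g' : ℝ → ℝ := fun a => if 0 < f a then g a else 0 with hg'
  have hzero : ∀ a, ¬ 0 < f a → f a = 0 := fun a h => le_antisymm (not_lt.mp h) (hf.1 a)
  have hswap : ∀ F : ℝ → ℝ → ℝ, ∑ a ∈ P, f a * F a (g a) = ∑ a ∈ P, f a * F a (g' a) := by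
    intro F
    refine Finset.sum_congr rfl fun a _ => ?_
    by_cases h : 0 < f a
    · simp [hg', h]
    · simp [hzero a h]
  have hmean' : ∑ a ∈ P, f a * g' a = 0 := by
    rw [← hswap (fun _ y => y)]; exact hmean
  have hbd' : ∀ a ∈ P, |g' a| ≤ d := by
    intro a ha
    by_cases h : 0 < f a
    · simpa [hg', h] using hbd a ha h
    · simp [hg', h, hd.le]
  calc ∑ a ∈ P, f a * Real.exp (l * g a)
      = ∑ a ∈ P, f a * Real.exp (l * g' a) := hswap (fun _ y => Real.exp (l * y))
    _ ≤ ∑ a ∈ P, f a * (Real.cosh (l*d) + (g' a / d) * Real.sinh (l*d)) := by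
        refine Finset.sum_le_sum fun a ha => ?_
        exact mul_le_mul_of_nonneg_left (chord_exp hd (hbd' a ha)) (hf.1 a)
    _ = Real.cosh (l*d) * (∑ a ∈ P, f a) + (Real.sinh (l*d) / d) * ∑ a ∈ P, f a * g' a := by
        rw [Finset.mul_sum, Finset.mul_sum, ← Finset.sum_add_distrib]
        refine Finset.sum_congr rfl fun a _ => ?_
        field_simp
    _ = Real.cosh (l*d) := by rw [hf.2.1, hmean']; ring
    _ ≤ Real.exp ((l*d)^2 / 2) := Real.cosh_le_exp_half_sq _
    _ = Real.exp (l^2 * d^2 / 2) := by rw [mul_pow]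


section Aux
variable (P : Finset ℝ) {T : ℕ} (π x : Fin T → ℝ → ℝ)

lemma supp_subset (t : Fin T) : suppF P (π t) ⊆ P := Finset.filter_subset _ _

lemma pi_pos_of_mem_supp {t : Fin T} {a : ℝ} (ha : a ∈ suppF P (π t)) : 0 < π t a :=
  (Finset.mem_filter.mp ha).2

-- expectation of the propensity estimator is the pessimistic allocation
lemma exp_xhat (hpmf : ∀ t, IsPMF P (π t)) (t : Fin T) (r : ℝ) :
    ∑ s ∈ P, π t s * xhatF P π x t s r = pessA P π x t r := by
  have keyptwise : ∀ u ∈ suppF P (π t),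
      ∑ s ∈ P, π t s * (if u = s then x t s / π t s else 0) = x t u := by
    intro u hu
    have hu' : 0 < π t u := pi_pos_of_mem_supp P π hu
    have huP : u ∈ P := supp_subset P π t hu
    rw [Finset.sum_congr rfl (fun s _ => mul_ite (u = s) (π t s) (x t s / π t s) 0)]
    simp only [mul_zero]
    rw [Finset.sum_ite_eq P u (fun s => π t s * (x t s / π t s)), if_pos huP]
    field_simp
  unfold xhatF pessA
  by_cases hr : r ∈ suppF P (π t)
  · simp only [if_pos hr]
    exact keyptwise r hr
  · simp only [if_neg hr]
    by_cases h : ((suppF P (π t)).filter fun r' => r' ≤ r).Nonempty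
    · simp only [dif_pos h]
      set u := ((suppF P (π t)).filter fun r' => r' ≤ r).max' h with hu
      have humem : u ∈ suppF P (π t) :=
        (Finset.mem_filter.mp (Finset.max'_mem _ h)).1
      exact keyptwise u humem
    · simp only [dif_neg h, mul_one]
      exact (hpmf t).2.1

section Bnd
variable (P : Finset ℝ) {T : ℕ} (π x : Fin T → ℝ → ℝ)

lemma pi_le_one (hpmf : ∀ t, IsPMF P (π t)) (t : Fin T) {a : ℝ} (ha : a ∈ P) :
    π t a ≤ 1 := by
  rw [← (hpmf t).2.1]
  exact Finset.single_le_sum (fun b _ => (hpmf t).1 b) ha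

lemma inf_pos (hsupp : ∀ t, (suppF P (π t)).Nonempty) (t : Fin T) :
    0 < (suppF P (π t)).inf' (hsupp t) (π t) :=
  (Finset.lt_inf'_iff _).mpr fun a ha => (Finset.mem_filter.mp ha).2

lemma inf_le_one (hpmf : ∀ t, IsPMF P (π t)) (hsupp : ∀ t, (suppF P (π t)).Nonempty)
    (t : Fin T) : (suppF P (π t)).inf' (hsupp t) (π t) ≤ 1 := by
  obtain ⟨a, ha⟩ := hsupp t
  exact (Finset.inf'_le _ ha).trans (pi_le_one P π hpmf t ((Finset.filter_subset _ _) ha))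

lemma pess_bounds (hx : IsAllocSeq P x) (t : Fin T) (r : ℝ) :
    pessA P π x t r ∈ Set.Icc (0:ℝ) 1 := by
  unfold pessA
  by_cases hr : r ∈ suppF P (π t)
  · rw [if_pos hr]; exact (hx t).1 r ((Finset.filter_subset _ _) hr)
  · rw [if_neg hr]
    by_cases h : ((suppF P (π t)).filter fun r' => r' ≤ r).Nonempty
    · rw [dif_pos h]
      have := Finset.max'_mem _ h
      exact (hx t).1 _ (supp_subset P π t (Finset.mem_filter.mp this).1)
    · rw [dif_neg h]; exact ⟨zero_le_one, le_refl 1⟩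

lemma xhat_bounds (hpmf : ∀ t, IsPMF P (π t)) (hsupp : ∀ t, (suppF P (π t)).Nonempty)
    (hx : IsAllocSeq P x) (t : Fin T) {s : ℝ} (hs : s ∈ suppF P (π t)) (r : ℝ) :
    xhatF P π x t s r ∈ Set.Icc (0:ℝ) (1 / (suppF P (π t)).inf' (hsupp t) (π t)) := by
  set m := (suppF P (π t)).inf' (hsupp t) (π t) with hm
  have hm0 : 0 < m := inf_pos P π hsupp t
  have hm1 : m ≤ 1 := inf_le_one P π hpmf hsupp t
  have hsP : s ∈ P := (Finset.filter_subset _ _) hs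
  have hsπ : 0 < π t s := (Finset.mem_filter.mp hs).2
  have hratio : x t s / π t s ∈ Set.Icc (0:ℝ) (1/m) := by
    constructor
    · exact div_nonneg ((hx t).1 s hsP).1 hsπ.le
    · exact div_le_div₀ zero_le_one ((hx t).1 s hsP).2 hm0 (Finset.inf'_le _ hs)
  have h1m : (1:ℝ) ≤ 1/m := by rw [le_div_iff₀ hm0]; linarith
  unfold xhatF
  by_cases hr : r ∈ suppF P (π t)
  · rw [if_pos hr]
    split
    · exact hratio
    · exact ⟨le_refl 0, by positivity⟩
  · rw [if_neg hr]
    by_cases h : ((suppF P (π t)).filter fun r' => r' ≤ r).Nonempty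
    · rw [dif_pos h]
      split
      · exact hratio
      · exact ⟨le_refl 0, by positivity⟩
    · rw [dif_neg h]; exact ⟨zero_le_one, h1m⟩

end Bnd

section GLem
variable (P : Finset ℝ) {T : ℕ} (π x : Fin T → ℝ → ℝ)

lemma gsum_zero (hpmf : ∀ t, IsPMF P (π t)) (t : Fin T) (p q c : ℝ) :
    ∑ s ∈ P, π t s * ((T:ℝ)⁻¹ *
      (π t p * ((q-c) * xhatF P π x t s q - (p-c) * xhatF P π x t s p) -
       π t p * ((q-c) * pessA P π x t q - (p-c) * pessA P π x t p))) = 0 := by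
  set K := π t p * ((q-c) * pessA P π x t q - (p-c) * pessA P π x t p) with hK
  have expand : ∀ s, π t s * ((T:ℝ)⁻¹ *
      (π t p * ((q-c) * xhatF P π x t s q - (p-c) * xhatF P π x t s p) - K)) =
      ((T:ℝ)⁻¹ * π t p * (q-c)) * (π t s * xhatF P π x t s q) -
      ((T:ℝ)⁻¹ * π t p * (p-c)) * (π t s * xhatF P π x t s p) -
      ((T:ℝ)⁻¹ * K) * π t s := fun s => by ring
  rw [Finset.sum_congr rfl fun s _ => expand s]
  rw [Finset.sum_sub_distrib, Finset.sum_sub_distrib, ← Finset.mul_sum,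
    ← Finset.mul_sum, ← Finset.mul_sum]
  rw [exp_xhat P π x hpmf t q, exp_xhat P π x hpmf t p, (hpmf t).2.1, hK]
  ring

lemma g_bound (hP : P.Nonempty) (hpos : ∀ p ∈ P, 0 < p)
    (hpmf : ∀ t, IsPMF P (π t)) (hsupp : ∀ t, (suppF P (π t)).Nonempty)
    (hx : IsAllocSeq P x) {c : ℝ} (hc0 : 0 ≤ c) (hc1 : c ≤ P.min' hP)
    (t : Fin T) {p q s : ℝ} (hp : p ∈ P) (hq : q ∈ P) (hsP : s ∈ P)
    (hsπ : 0 < π t s) :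
    |(T:ℝ)⁻¹ * (π t p * ((q-c) * xhatF P π x t s q - (p-c) * xhatF P π x t s p) -
       π t p * ((q-c) * pessA P π x t q - (p-c) * pessA P π x t p))| ≤
    (T:ℝ)⁻¹ * (1 / ((suppF P (π t)).inf' (hsupp t) (π t)) + 1) * P.max' hP := by
  set m := (suppF P (π t)).inf' (hsupp t) (π t) with hm
  set M := 1 / m with hMdef
  set pbar := P.max' hP with hpbar
  have hs : s ∈ suppF P (π t) := Finset.mem_filter.mpr ⟨hsP, hsπ⟩
  have hm0 : 0 < m := inf_pos P π hsupp t
  have hm1 : m ≤ 1 := inf_le_one P π hpmf hsupp t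
  have hM1 : 1 ≤ M := by rw [hMdef, le_div_iff₀ hm0]; linarith
  have hA := xhat_bounds P π x hpmf hsupp hx t hs q
  have hC := xhat_bounds P π x hpmf hsupp hx t hs p
  have hB := pess_bounds P π x hx t q
  have hD := pess_bounds P π x hx t p
  obtain ⟨hA0, hA1⟩ := hA; obtain ⟨hC0, hC1⟩ := hC
  obtain ⟨hB0, hB1⟩ := hB; obtain ⟨hD0, hD1⟩ := hD
  rw [← hm, ← hMdef] at hA1 hC1
  have hpb0 : 0 < pbar := hpos _ (P.max'_mem hP)
  have hα0 : 0 ≤ q - c := by have := P.min'_le q hq; linarith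
  have hα1 : q - c ≤ pbar := by have := P.le_max' q hq; linarith
  have hβ0 : 0 ≤ p - c := by have := P.min'_le p hp; linarith
  have hβ1 : p - c ≤ pbar := by have := P.le_max' p hp; linarith
  have hw0 : 0 ≤ π t p := (hpmf t).1 p
  have hw1 : π t p ≤ 1 := pi_le_one P π hpmf t hp
  set A := xhatF P π x t s q; set C := xhatF P π x t s p
  set B := pessA P π x t q; set D := pessA P π x t p
  have hbd0 : 0 ≤ (M + 1) * pbar := by positivity
  have hIub : (q-c) * A - (p-c) * C - ((q-c) * B - (p-c) * D) ≤ (M+1) * pbar := by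
    have h1 := mul_le_mul hα1 hA1 hA0 hpb0.le
    have h2 := mul_le_mul hβ1 hD1 hD0 hpb0.le
    have h3 := mul_nonneg hβ0 hC0
    have h4 := mul_nonneg hα0 hB0
    nlinarith
  have hIlb : -((M+1) * pbar) ≤ (q-c) * A - (p-c) * C - ((q-c) * B - (p-c) * D) := by
    have h1 := mul_le_mul hα1 hB1 hB0 hpb0.le
    have h2 := mul_le_mul hβ1 hC1 hC0 hpb0.le
    have h3 := mul_nonneg hα0 hA0
    have h4 := mul_nonneg hβ0 hD0
    nlinarith
  have hinner : |π t p * ((q-c) * A - (p-c) * C) - π t p * ((q-c) * B - (p-c) * D)|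
      ≤ (M + 1) * pbar := by
    rw [← mul_sub, abs_mul, abs_of_nonneg hw0]
    calc π t p * |(q-c) * A - (p-c) * C - ((q-c) * B - (p-c) * D)|
        ≤ 1 * ((M+1) * pbar) :=
          mul_le_mul hw1 (abs_le.mpr ⟨hIlb, hIub⟩) (abs_nonneg _) zero_le_one
      _ = (M+1) * pbar := one_mul _
  have hTi : (0:ℝ) ≤ (T:ℝ)⁻¹ := by positivity
  rw [abs_mul, abs_of_nonneg hTi, mul_assoc]
  refine mul_le_mul_of_nonneg_left ?_ hTi
  exact hinner

open Classical in
lemma chernoff (P : Finset ℝ) {T : ℕ} (hT : 1 ≤ T) (π : Fin T → ℝ → ℝ)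
    (hpmf : ∀ t, IsPMF P (π t)) (g : Fin T → ℝ → ℝ) (d : Fin T → ℝ)
    (hd : ∀ t, 0 < d t) (hmean : ∀ t, ∑ a ∈ P, π t a * g t a = 0)
    (hbd : ∀ t, ∀ a ∈ P, 0 < π t a → |g t a| ≤ d t) (s : ℝ) (hs : 0 < s) :
    probM P π (fun ps => s ≤ ∑ t, g t (ps t)) ≤
      Real.exp (-(s^2)/(2 * ∑ t, (d t)^2)) := by
  haveI : Nonempty (Fin T) := ⟨⟨0, hT⟩⟩
  set D := ∑ t, (d t)^2 with hDdef
  have hD : 0 < D := Finset.sum_pos (fun t _ => pow_pos (hd t) 2) Finset.univ_nonempty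
  set l := s / D with hldef
  have hl : 0 ≤ l := div_nonneg hs.le hD.le
  have step1 : probM P π (fun ps => s ≤ ∑ t, g t (ps t)) ≤
      ∑ ps ∈ Fintype.piFinset (fun _ : Fin T => P),
        (∏ t, π t (ps t)) * Real.exp (l * ((∑ t, g t (ps t)) - s)) := by
    unfold probM
    refine Finset.sum_le_sum fun ps _ => ?_
    by_cases h : s ≤ ∑ t, g t (ps t)
    · rw [if_pos h]
      exact le_mul_of_one_le_right (Finset.prod_nonneg fun t _ => (hpmf t).1 _)
        (Real.one_le_exp (mul_nonneg hl (sub_nonneg.mpr h)))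
    · rw [if_neg h]
      exact mul_nonneg (Finset.prod_nonneg fun t _ => (hpmf t).1 _) (Real.exp_pos _).le
  have step2 : ∀ ps : Fin T → ℝ,
      (∏ t, π t (ps t)) * Real.exp (l * ((∑ t, g t (ps t)) - s)) =
      Real.exp (-(l * s)) * ∏ t, (π t (ps t) * Real.exp (l * g t (ps t))) := by
    intro ps
    rw [Finset.prod_mul_distrib, ← Real.exp_sum]
    rw [show l * ((∑ t, g t (ps t)) - s) = (∑ t, l * g t (ps t)) + (-(l*s)) by
      rw [mul_sub, Finset.mul_sum]; ring]
    rw [Real.exp_add]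
    ring
  have step3 :
      ∑ ps ∈ Fintype.piFinset (fun _ : Fin T => P),
        ∏ t, (π t (ps t) * Real.exp (l * g t (ps t))) =
      ∏ t, ∑ a ∈ P, π t a * Real.exp (l * g t a) :=
    (Finset.prod_univ_sum (fun _ : Fin T => P) (fun t a => π t a * Real.exp (l * g t a))).symm
  have step4 : ∏ t, (∑ a ∈ P, π t a * Real.exp (l * g t a)) ≤
      ∏ t : Fin T, Real.exp (l^2 * (d t)^2 / 2) := by
    refine Finset.prod_le_prod (fun t _ => Finset.sum_nonneg fun a _ =>
      mul_nonneg ((hpmf t).1 a) (Real.exp_pos _).le) fun t _ =>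
      mgf_bound P (π t) (hpmf t) (g t) (hd t) l (hmean t) (hbd t)
  calc probM P π (fun ps => s ≤ ∑ t, g t (ps t))
      ≤ ∑ ps ∈ Fintype.piFinset (fun _ : Fin T => P),
        (∏ t, π t (ps t)) * Real.exp (l * ((∑ t, g t (ps t)) - s)) := step1
    _ = Real.exp (-(l*s)) * ∑ ps ∈ Fintype.piFinset (fun _ : Fin T => P),
        ∏ t, (π t (ps t) * Real.exp (l * g t (ps t))) := by
        rw [Finset.mul_sum]; exact Finset.sum_congr rfl fun ps _ => step2 ps
    _ = Real.exp (-(l*s)) * ∏ t, ∑ a ∈ P, π t a * Real.exp (l * g t a) := by rw [step3]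
    _ ≤ Real.exp (-(l*s)) * ∏ t : Fin T, Real.exp (l^2 * (d t)^2 / 2) :=
        mul_le_mul_of_nonneg_left step4 (Real.exp_pos _).le
    _ = Real.exp (-(l*s) + ∑ t, l^2 * (d t)^2 / 2) := by
        rw [Real.exp_add, Real.exp_sum]
    _ ≤ Real.exp (-(s^2)/(2*D)) := by
        apply Real.exp_le_exp.mpr
        have : ∑ t, l^2 * (d t)^2 / 2 = l^2 * D / 2 := by
          rw [hDdef, Finset.mul_sum, Finset.sum_div]
        rw [this, hldef]
        rw [div_pow, div_mul_eq_mul_div, div_mul_eq_mul_div]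
        rw [le_div_iff₀ (by positivity)]
        field_simp
        norm_num


open Classical in
lemma probM_congr (P : Finset ℝ) {T : ℕ} (π : Fin T → ℝ → ℝ)
    (E₁ E₂ : (Fin T → ℝ) → Prop) (h : ∀ ps, E₁ ps ↔ E₂ ps) :
    probM P π E₁ = probM P π E₂ := by
  unfold probM
  exact Finset.sum_congr rfl fun ps _ => if_congr (h ps) rfl rfl

open Classical in
lemma probM_union (P : Finset ℝ) {T : ℕ} (π : Fin T → ℝ → ℝ)
    (hpmf : ∀ t, IsPMF P (π t))
    (E : (Fin T → ℝ) → Prop) (F : ℝ → ℝ → (Fin T → ℝ) → Prop)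
    (himp : ∀ ps, E ps → ∃ p ∈ P, ∃ q ∈ P, F p q ps) :
    probM P π E ≤ ∑ p ∈ P, ∑ q ∈ P, probM P π (F p q) := by
  unfold probM
  have hnn : ∀ (G : (Fin T → ℝ) → Prop) (ps : Fin T → ℝ),
      (0:ℝ) ≤ if G ps then ∏ t, π t (ps t) else 0 := by
    intro G ps
    split
    · exact Finset.prod_nonneg fun t _ => (hpmf t).1 _
    · exact le_refl 0
  calc ∑ ps ∈ Fintype.piFinset (fun _ : Fin T => P),
        (if E ps then ∏ t, π t (ps t) else 0)
      ≤ ∑ ps ∈ Fintype.piFinset (fun _ : Fin T => P),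
        ∑ p ∈ P, ∑ q ∈ P, (if F p q ps then ∏ t, π t (ps t) else 0) := by
        refine Finset.sum_le_sum fun ps _ => ?_
        by_cases h : E ps
        · rw [if_pos h]
          obtain ⟨p, hp, q, hq, hF⟩ := himp ps h
          calc (∏ t, π t (ps t))
              = (if F p q ps then ∏ t, π t (ps t) else 0) := (if_pos hF).symm
            _ ≤ ∑ q ∈ P, (if F p q ps then ∏ t, π t (ps t) else 0) :=
                Finset.single_le_sum (fun q' _ => hnn (F p q') ps) hq
            _ ≤ ∑ p ∈ P, ∑ q ∈ P, (if F p q ps then ∏ t, π t (ps t) else 0) :=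
                Finset.single_le_sum (fun p' _ => Finset.sum_nonneg
                  fun q' _ => hnn (F p' q') ps) hp
        · rw [if_neg h]
          exact Finset.sum_nonneg fun p' _ => Finset.sum_nonneg
            fun q' _ => hnn (F p' q') ps
    _ = ∑ p ∈ P, ∑ q ∈ P, ∑ ps ∈ Fintype.piFinset (fun _ : Fin T => P),
        (if F p q ps then ∏ t, π t (ps t) else 0) := by
        rw [Finset.sum_comm]
        exact Finset.sum_congr rfl fun p _ => Finset.sum_comm

lemma decompRt (P : Finset ℝ) {T : ℕ} (π x : Fin T → ℝ → ℝ) (c p q : ℝ)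
    (ps : Fin T → ℝ) :
    Rtilpq P π x c p q ps - Rbarpq P π x c p q =
      ∑ t : Fin T, (T:ℝ)⁻¹ *
        (π t p * ((q-c) * xhatF P π x t (ps t) q - (p-c) * xhatF P π x t (ps t) p) -
         π t p * ((q-c) * pessA P π x t q - (p-c) * pessA P π x t p)) := by
  unfold Rtilpq Rbarpq
  rw [← mul_sub, ← Finset.sum_sub_distrib, Finset.mul_sum]


/-- one-sided concentration of the estimated regret
`R̃^T(c) = ∑_p max_q R̃^T_{p,q}(c)` around the pessimistic regret
`R̄^T(c) = ∑_p max_q R̄^T_{p,q}(c)`. -/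
theorem estimated_regret_upper_concentration
    (P : Finset ℝ) (hP : P.Nonempty) (hpos : ∀ p ∈ P, 0 < p)
    {T : ℕ} (hT : 1 ≤ T) (π : Fin T → ℝ → ℝ)
    (hpmf : ∀ t, IsPMF P (π t)) (hsupp : ∀ t, (suppF P (π t)).Nonempty)
    (x : Fin T → ℝ → ℝ) (hx : IsAllocSeq P x)
    (c : ℝ) (hc0 : 0 ≤ c) (hc1 : c ≤ P.min' hP) :
    ∀ ε : ℝ, 0 < ε →
      probM P π (fun ps =>
          ε ≤ (∑ p ∈ P, P.sup' hP fun q => Rtilpq P π x c p q ps) -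
            ∑ p ∈ P, P.sup' hP fun q => Rbarpq P π x c p q) ≤
        2 * (P.card : ℝ) ^ 2 * Real.exp (-(ε ^ 2) / (2 * (P.card : ℝ) ^ 2 *
          ∑ t : Fin T,
            ((T : ℝ)⁻¹ * (1 / ((suppF P (π t)).inf' (hsupp t) (π t)) + 1) *
              P.max' hP) ^ 2)) := by
  intro ε hε
  classical
  set d : Fin T → ℝ := fun t =>
    (T : ℝ)⁻¹ * (1 / ((suppF P (π t)).inf' (hsupp t) (π t)) + 1) * P.max' hP
    with hd_def
  show _ ≤ 2 * (P.card : ℝ) ^ 2 *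
    Real.exp (-(ε ^ 2) / (2 * (P.card : ℝ) ^ 2 * ∑ t : Fin T, (d t) ^ 2))
  have hT0 : (0:ℝ) < (T:ℝ)⁻¹ := by
    have h1 : (0:ℝ) < (T:ℝ) := by exact_mod_cast lt_of_lt_of_le zero_lt_one hT
    positivity
  have hpb0 : 0 < P.max' hP := hpos _ (P.max'_mem hP)
  have hd : ∀ t, 0 < d t := by
    intro t
    have hm0 := inf_pos P π hsupp t
    have h2 : 0 < 1 / ((suppF P (π t)).inf' (hsupp t) (π t)) + 1 := by positivity
    exact mul_pos (mul_pos hT0 h2) hpb0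
  have hk1 : (1:ℝ) ≤ (P.card : ℝ) := by
    exact_mod_cast Nat.one_le_iff_ne_zero.mpr (Finset.card_ne_zero_of_mem (hP.choose_spec))
  have hk0 : (0:ℝ) < (P.card : ℝ) := lt_of_lt_of_le zero_lt_one hk1
  have hεk : 0 < ε / (P.card : ℝ) := div_pos hε hk0
  -- per-pair Chernoff bound
  have keypair : ∀ p ∈ P, ∀ q ∈ P,
      probM P π (fun ps => ε / (P.card : ℝ) ≤
          Rtilpq P π x c p q ps - Rbarpq P π x c p q) ≤
      Real.exp (-(ε ^ 2) / (2 * (P.card : ℝ) ^ 2 * ∑ t : Fin T, (d t) ^ 2)) := by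
    intro p hp q hq
    set g : Fin T → ℝ → ℝ := fun t a => (T:ℝ)⁻¹ *
      (π t p * ((q-c) * xhatF P π x t a q - (p-c) * xhatF P π x t a p) -
       π t p * ((q-c) * pessA P π x t q - (p-c) * pessA P π x t p)) with hg
    have hE : ∀ ps : Fin T → ℝ,
        (ε / (P.card : ℝ) ≤ Rtilpq P π x c p q ps - Rbarpq P π x c p q) ↔
        (ε / (P.card : ℝ) ≤ ∑ t : Fin T, g t (ps t)) := by
      intro ps
      rw [decompRt P π x c p q ps]
    rw [probM_congr P π _ _ hE]
    have hch := chernoff P hT π hpmf g d hd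
      (fun t => gsum_zero P π x hpmf t p q c)
      (fun t a ha hπ => g_bound P π x hP hpos hpmf hsupp hx hc0 hc1 t hp hq ha hπ)
      (ε / (P.card : ℝ)) hεk
    refine hch.trans (le_of_eq ?_)
    congr 1
    rw [div_pow]
    have hD : ∑ t : Fin T, (d t)^2 = ∑ t : Fin T, (d t)^2 := rfl
    field_simp
  -- union bound implication
  have himp : ∀ ps : Fin T → ℝ,
      (ε ≤ (∑ p ∈ P, P.sup' hP fun q => Rtilpq P π x c p q ps) -
        ∑ p ∈ P, P.sup' hP fun q => Rbarpq P π x c p q) →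
      ∃ p ∈ P, ∃ q ∈ P,
        ε / (P.card : ℝ) ≤ Rtilpq P π x c p q ps - Rbarpq P π x c p q := by
    intro ps hps
    by_contra hcon
    push_neg at hcon
    have hlt : ∀ p ∈ P,
        (P.sup' hP fun q => Rtilpq P π x c p q ps) -
          (P.sup' hP fun q => Rbarpq P π x c p q) < ε / (P.card : ℝ) := by
      intro p hp
      obtain ⟨q0, hq0, hq0e⟩ :=
        Finset.exists_mem_eq_sup' hP (fun q => Rtilpq P π x c p q ps)
      rw [hq0e]
      have h1 : Rbarpq P π x c p q0 ≤ P.sup' hP fun q => Rbarpq P π x c p q :=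
        Finset.le_sup' _ hq0
      have h2 := hcon p hp q0 hq0
      linarith
    have hsum := Finset.sum_lt_sum_of_nonempty hP hlt
    rw [Finset.sum_sub_distrib, Finset.sum_const, nsmul_eq_mul] at hsum
    have hcard : (P.card : ℝ) * (ε / (P.card : ℝ)) = ε := by field_simp
    rw [hcard] at hsum
    linarith
  calc probM P π (fun ps =>
        ε ≤ (∑ p ∈ P, P.sup' hP fun q => Rtilpq P π x c p q ps) -
          ∑ p ∈ P, P.sup' hP fun q => Rbarpq P π x c p q)
      ≤ ∑ p ∈ P, ∑ q ∈ P, probM P π (fun ps =>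
          ε / (P.card : ℝ) ≤ Rtilpq P π x c p q ps - Rbarpq P π x c p q) :=
        probM_union P π hpmf _ _ himp
    _ ≤ ∑ p ∈ P, ∑ q ∈ P,
          Real.exp (-(ε ^ 2) / (2 * (P.card : ℝ) ^ 2 * ∑ t : Fin T, (d t) ^ 2)) :=
        Finset.sum_le_sum fun p hp => Finset.sum_le_sum fun q hq => keypair p hp q hq
    _ = (P.card : ℝ) ^ 2 *
          Real.exp (-(ε ^ 2) / (2 * (P.card : ℝ) ^ 2 * ∑ t : Fin T, (d t) ^ 2)) := by
        rw [Finset.sum_const, Finset.sum_const, nsmul_eq_mul, nsmul_eq_mul]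
        ring
    _ ≤ 2 * (P.card : ℝ) ^ 2 *
          Real.exp (-(ε ^ 2) / (2 * (P.card : ℝ) ^ 2 * ∑ t : Fin T, (d t) ^ 2)) := by
        nlinarith [Real.exp_pos (-(ε ^ 2) / (2 * (P.card : ℝ) ^ 2 * ∑ t : Fin T, (d t) ^ 2)), hk0]
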